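/- Let β > 1 be a Pisot number, i.e., a real algebraic integer greater than 1 all of whose complex conjugates other than β itself have modulus strictly less than 1. Then for every x ∈ ℚ(β) ∩ [0,1) the orbit of x under the beta-transformation T_β is ultimately periodic: there exist k ∈ ℕ and l ≥ 1 with T_β^{k+l}(x) = T_β^k(x). -/

import Mathlib

/-- The beta-transformation `T_β(γ) = βγ - ⌊βγ⌋`. -/
noncomputable def betaT (β : ℝ) (x : ℝ) : ℝ := Int.fract (β * x)

open Polynomial

/-- Orbit polynomials: reduce `X * P - c` mod `m` at each step. -/
noncomputable def orbitPoly (m P₀ : ℤ[X]) (c : ℕ → ℤ) : ℕ → ℤ[X]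
  | 0 => P₀ %ₘ m
  | n+1 => (X * orbitPoly m P₀ c n - C (c n)) %ₘ m

lemma aeval_modByMonic {A : Type*} [CommRing A] [Algebra ℤ A] {m : ℤ[X]} (hm : m.Monic)
    {μ : A} (hμ : aeval μ m = 0) (p : ℤ[X]) : aeval μ (p %ₘ m) = aeval μ p := by
  conv_rhs => rw [← modByMonic_add_div p m]
  rw [map_add, map_mul, hμ, zero_mul, add_zero]

lemma aeval_orbitPoly_zero {A : Type*} [CommRing A] [Algebra ℤ A] {m : ℤ[X]} (hm : m.Monic)
    {μ : A} (hμ : aeval μ m = 0) (P₀ : ℤ[X]) (c : ℕ → ℤ) :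
    aeval μ (orbitPoly m P₀ c 0) = aeval μ P₀ := aeval_modByMonic hm hμ _

lemma aeval_orbitPoly_succ {A : Type*} [CommRing A] [Algebra ℤ A] {m : ℤ[X]} (hm : m.Monic)
    {μ : A} (hμ : aeval μ m = 0) (P₀ : ℤ[X]) (c : ℕ → ℤ) (n : ℕ) :
    aeval μ (orbitPoly m P₀ c (n+1)) = μ * aeval μ (orbitPoly m P₀ c n) - algebraMap ℤ A (c n) := by
  show aeval μ ((X * orbitPoly m P₀ c n - C (c n)) %ₘ m) = _
  rw [aeval_modByMonic hm hμ, map_sub, map_mul, aeval_X, aeval_C]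

lemma degree_orbitPoly_lt {m : ℤ[X]} (hm : m.Monic) (P₀ : ℤ[X]) (c : ℕ → ℤ) (n : ℕ) :
    (orbitPoly m P₀ c n).degree < m.degree := by
  cases n <;> exact degree_modByMonic_lt _ hm

lemma contract_bound {A D : ℝ} (hA0 : 0 ≤ A) (hA : A < 1) (hD : 0 ≤ D) (z : ℕ → ℝ)
    (h0 : ∀ n, 0 ≤ z n) (hrec : ∀ n, z (n+1) ≤ A * z n + D) :
    ∀ n, z n ≤ z 0 + D / (1 - A) := by
  intro n
  induction n with
  | zero =>
      have : 0 ≤ D / (1 - A) := div_nonneg hD (by linarith)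
      linarith
  | succ n ih =>
      have h1 : D / (1 - A) * (1 - A) = D := div_mul_cancel₀ _ (by linarith)
      have h2 := hrec n
      nlinarith [h0 0, mul_le_mul_of_nonneg_left ih hA0]

lemma mem_closure_repr (β : ℝ) (hint : IsIntegral ℤ β) {x : ℝ}
    (hx : x ∈ Subfield.closure ({β} : Set ℝ)) :
    ∃ (q : ℤ) (P : ℤ[X]), 0 < q ∧ (q : ℝ) * x = Polynomial.aeval β P := by
  have hQ : IsIntegral ℚ β := hint.tower_top
  have h1 : x ∈ IntermediateField.adjoin ℚ ({β} : Set ℝ) := by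
    have hβmem : β ∈ (IntermediateField.adjoin ℚ ({β} : Set ℝ)).toSubfield :=
      IntermediateField.subset_adjoin ℚ {β} rfl
    have hle : Subfield.closure ({β} : Set ℝ) ≤
        (IntermediateField.adjoin ℚ ({β} : Set ℝ)).toSubfield :=
      Subfield.closure_le.mpr (Set.singleton_subset_iff.mpr hβmem)
    exact hle hx
  have h2 : x ∈ Algebra.adjoin ℚ ({β} : Set ℝ) := by
    have := IntermediateField.adjoin_simple_toSubalgebra_of_isAlgebraic (α := β) hQ.isAlgebraic
    rw [← this]
    exact h1
  rw [Algebra.adjoin_singleton_eq_range_aeval] at h2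
  obtain ⟨Q, hQx'⟩ := h2
  have hQx : Polynomial.aeval β Q = x := hQx'
  obtain ⟨b, hb⟩ := IsLocalization.integerNormalization_map_to_map (nonZeroDivisors ℤ) Q
  set P' := IsLocalization.integerNormalization (nonZeroDivisors ℤ) Q with hP'
  have hb0 : (b : ℤ) ≠ 0 := nonZeroDivisors.coe_ne_zero b
  have key : ((b : ℤ) : ℝ) * x = Polynomial.aeval β P' := by
    have h3 : Polynomial.aeval β (P'.map (algebraMap ℤ ℚ)) = Polynomial.aeval β P' :=
      aeval_map_algebraMap ℚ β P'
    rw [hb] at h3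
    have h4 : Polynomial.aeval β ((b : ℤ) • Q) = (b : ℤ) • Polynomial.aeval β Q := by
      exact map_zsmul (Polynomial.aeval β) _ _
    rw [h4, hQx] at h3
    rw [← h3, zsmul_eq_mul]
  rcases lt_or_gt_of_ne hb0 with hneg | hpos
  · refine ⟨-(b : ℤ), -P', by omega, ?_⟩
    rw [map_neg, ← key]; push_cast; ring
  · exact ⟨b, P', hpos, key⟩

lemma betaT_iter_mem (β : ℝ) (hβ : 0 < β) {x : ℝ} (hx : x ∈ Set.Ico (0:ℝ) 1) (n : ℕ) :
    (betaT β)^[n] x ∈ Set.Ico (0:ℝ) 1 := by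
  induction n with
  | zero => exact hx
  | succ n ih =>
      rw [Function.iterate_succ_apply']
      exact ⟨Int.fract_nonneg _, Int.fract_lt_one _⟩

/-- if `β` is a Pisot number then the `T_β`-orbit of every
`x ∈ ℚ(β) ∩ [0,1)` is ultimately periodic. -/
theorem pisot_orbit_ultimately_periodic (β : ℝ) (hβ : 1 < β)
    (hint : IsIntegral ℤ β)
    (hpisot : ∀ μ : ℂ, ((minpoly ℤ β).map (Int.castRingHom ℂ)).IsRoot μ →
      μ ≠ (β : ℂ) → ‖μ‖ < 1) :
    ∀ x : ℝ, x ∈ Subfield.closure ({β} : Set ℝ) → x ∈ Set.Ico (0 : ℝ) 1 →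
      ∃ k l : ℕ, 1 ≤ l ∧ (betaT β)^[k + l] x = (betaT β)^[k] x := by
  intro x hxmem hxIco
  classical
  set m : ℤ[X] := minpoly ℤ β with hm_def
  have hm : m.Monic := minpoly.monic hint
  set d : ℕ := m.natDegree with hd_def
  set mm : ℂ[X] := m.map (Int.castRingHom ℂ) with hmm_def
  have hQ : IsIntegral ℚ β := hint.tower_top
  -- the minimal polynomial over ℚ
  have hminQ : minpoly ℚ β = m.map (algebraMap ℤ ℚ) :=
    minpoly.isIntegrallyClosed_eq_field_fractions' ℚ hint
  have hmm_eq : mm = (minpoly ℚ β).map (algebraMap ℚ ℂ) := by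
    rw [hminQ, Polynomial.map_map]
    congr 1
  have hsep : (minpoly ℚ β).Separable := (minpoly.irreducible hQ).separable
  have hnodup : mm.roots.Nodup := by
    rw [hmm_eq]; exact Polynomial.nodup_roots hsep.map
  have hsplits : ((minpoly ℚ β).map (algebraMap ℚ ℂ)).Splits := IsAlgClosed.splits _
  set s : Finset ℂ := mm.roots.toFinset with hs_def
  have hscard : s.card = d := by
    have h1 : s.card = mm.roots.card := Multiset.toFinset_card_of_nodup hnodup
    have h2 : mm.roots.card = (minpoly ℚ β).natDegree := by
      rw [hmm_eq]
      exact hsplits.natDegree_eq_card_roots.symm.trans (natDegree_map _)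
    have h3 : (minpoly ℚ β).natDegree = d := by
      rw [hminQ, natDegree_map_eq_of_injective (algebraMap ℤ ℚ).injective_int]
    rw [h1, h2, h3]
  have hmdeg : m.degree = (d : WithBot ℕ) := degree_eq_natDegree hm.ne_zero
  -- roots of mm kill `m` under aeval
  have haev : ∀ μ : ℂ, μ ∈ s → Polynomial.aeval μ m = 0 := by
    intro μ hμ
    have := (Multiset.mem_toFinset.mp hμ)
    have hr : mm.IsRoot μ := isRoot_of_mem_roots this
    rw [Polynomial.aeval_def, ← Polynomial.eval_map, algebraMap_int_eq]
    exact hr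
  -- β (as a complex number) is a root
  have hmm0 : mm ≠ 0 := by
    rw [hmm_def]
    exact Polynomial.map_ne_zero_iff (Int.castRingHom ℂ).injective_int |>.mpr
      (minpoly.ne_zero hint)
  have haevβ : Polynomial.aeval ((β : ℂ)) m = 0 := by
    have : ((Polynomial.aeval β m : ℝ) : ℂ) = Polynomial.aeval ((β : ℂ)) m := by
      exact (Polynomial.aeval_algHom_apply Complex.ofRealHom.toIntAlgHom β m).symm
    rw [minpoly.aeval] at this
    simpa using this.symm
  have hβs : (β : ℂ) ∈ s := by
    rw [hs_def, Multiset.mem_toFinset]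
    refine (Polynomial.mem_roots hmm0).mpr ?_
    show Polynomial.eval _ mm = 0
    rw [hmm_def, Polynomial.eval_map, ← algebraMap_int_eq, ← Polynomial.aeval_def]
    exact haevβ
  -- representation of x
  obtain ⟨q, P₀, hq, hqx⟩ := mem_closure_repr β hint hxmem
  have hq0 : (q : ℝ) ≠ 0 := by positivity
  set y : ℕ → ℝ := fun n => (betaT β)^[n] x with hy_def
  have hy : ∀ n, y n ∈ Set.Ico (0:ℝ) 1 := fun n => betaT_iter_mem β (by linarith) hxIco n
  set c : ℕ → ℤ := fun n => q * ⌊β * y n⌋ with hc_def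
  set P : ℕ → ℤ[X] := orbitPoly m P₀ c with hP_def
  -- real evaluation
  have hreal : ∀ n, Polynomial.aeval β (P n) = (q : ℝ) * y n := by
    intro n
    induction n with
    | zero =>
        rw [hP_def]
        rw [aeval_orbitPoly_zero hm (minpoly.aeval ℤ β) P₀ c]
        simpa [hy_def] using hqx.symm
    | succ n ih =>
        rw [hP_def, aeval_orbitPoly_succ hm (minpoly.aeval ℤ β) P₀ c n, ← hP_def, ih]
        have hyn : y (n+1) = Int.fract (β * y n) := by
          simp only [hy_def, Function.iterate_succ_apply']
          rfl
        rw [hyn, Int.fract]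
        have : algebraMap ℤ ℝ (c n) = (q : ℝ) * (⌊β * y n⌋ : ℝ) := by
          simp only [hc_def, algebraMap_int_eq, eq_intCast]
          push_cast
          ring
        rw [this]; push_cast; ring
  -- bound on the digits
  have hcbound : ∀ n, |((c n : ℝ))| ≤ q * β := by
    intro n
    have h1 : (0:ℝ) ≤ β * y n := mul_nonneg (by linarith) (hy n).1
    have h2 : β * y n < β := by
      have := (hy n).2
      nlinarith [(hy n).1]
    have h3 : (0:ℤ) ≤ ⌊β * y n⌋ := Int.floor_nonneg.mpr h1
    have h4 : ((⌊β * y n⌋ : ℝ)) ≤ β * y n := Int.floor_le _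
    rw [hc_def]
    push_cast
    rw [abs_of_nonneg (by positivity)]
    have hq1 : (1:ℝ) ≤ (q:ℝ) := by exact_mod_cast hq
    nlinarith
  -- complex bounds at each root
  set B : ℂ → ℝ := fun μ =>
    max (‖Polynomial.aeval μ (P 0)‖ + ((q : ℝ) * β) / (1 - ‖μ‖)) q with hB_def
  have hbound : ∀ μ ∈ s, ∀ n, ‖Polynomial.aeval μ (P n)‖ ≤ B μ := by
    intro μ hμs n
    by_cases hμβ : μ = (β : ℂ)
    · -- real root: value is q * y n ∈ [0, q)
      subst hμβ
      have : Polynomial.aeval ((β:ℂ)) (P n) = (((q : ℝ) * y n : ℝ) : ℂ) := by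
        have h := Polynomial.aeval_algHom_apply Complex.ofRealHom.toIntAlgHom β (P n)
        rw [hreal n] at h
        exact h
      rw [this]
      have h1 : ‖(((q : ℝ) * y n : ℝ) : ℂ)‖ = |(q : ℝ) * y n| := by rw [Complex.norm_real, Real.norm_eq_abs]
      rw [h1]
      have hq1 : (0:ℝ) ≤ (q:ℝ) := by positivity
      have := (hy n).1
      have := (hy n).2
      rw [abs_of_nonneg (by positivity)]
      calc (q:ℝ) * y n ≤ (q:ℝ) * 1 := by nlinarith
        _ = q := mul_one _
        _ ≤ B ((β:ℂ)) := le_max_right _ _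
    · -- conjugate root: contraction
      have hμ1 : ‖μ‖ < 1 := by
        apply hpisot μ _ hμβ
        have := Multiset.mem_toFinset.mp hμs
        exact isRoot_of_mem_roots this
      have hμ0 : 0 ≤ ‖μ‖ := norm_nonneg μ
      have hD : (0:ℝ) ≤ (q:ℝ) * β := by positivity
      have hrec : ∀ k, ‖Polynomial.aeval μ (P (k+1))‖ ≤
          ‖μ‖ * ‖Polynomial.aeval μ (P k)‖ + (q:ℝ) * β := by
        intro k
        rw [hP_def, aeval_orbitPoly_succ hm (haev μ hμs) P₀ c k, ← hP_def]
        have hmap : algebraMap ℤ ℂ (c k) = ((c k : ℝ) : ℂ) := by push_cast; rfl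
        rw [hmap]
        calc ‖μ * Polynomial.aeval μ (P k) - ((c k : ℝ):ℂ)‖
            ≤ ‖μ * Polynomial.aeval μ (P k)‖ + ‖((c k : ℝ):ℂ)‖ := by
              exact norm_sub_le _ _
          _ ≤ ‖μ‖ * ‖Polynomial.aeval μ (P k)‖ + (q:ℝ) * β := by
              rw [norm_mul]
              gcongr
              rw [Complex.norm_real, Real.norm_eq_abs]
              exact hcbound k
      have := contract_bound hμ0 hμ1 hD (fun k => ‖Polynomial.aeval μ (P k)‖)
        (fun k => norm_nonneg _) hrec n
      calc ‖Polynomial.aeval μ (P n)‖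
          ≤ ‖Polynomial.aeval μ (P 0)‖ + ((q:ℝ) * β) / (1 - ‖μ‖) := this
        _ ≤ B μ := le_max_left _ _
  -- coefficient bounds via Lagrange interpolation
  set K : ℕ → ℝ := fun i => ∑ μ ∈ s, B μ * ‖(Lagrange.basis s id μ).coeff i‖
    with hK_def
  have hdegP : ∀ n, (P n).degree < (d : WithBot ℕ) := by
    intro n
    rw [← hmdeg, hP_def]
    exact degree_orbitPoly_lt hm P₀ c n
  have hcoeff : ∀ n i, |(((P n).coeff i : ℝ))| ≤ K i := by
    intro n i
    set Pc : ℂ[X] := (P n).map (Int.castRingHom ℂ) with hPc_def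
    have hdeg : Pc.degree < s.card := by
      calc Pc.degree ≤ (P n).degree := degree_map_le
        _ < (d : WithBot ℕ) := hdegP n
        _ = (s.card : WithBot ℕ) := by rw [hscard]
    have heq : Pc = Lagrange.interpolate s id (fun μ => Pc.eval μ) :=
      Lagrange.eq_interpolate (Set.injOn_id _) hdeg
    have hco : Pc.coeff i = ∑ μ ∈ s, Pc.eval μ * (Lagrange.basis s id μ).coeff i := by
      conv_lhs => rw [heq]
      rw [Lagrange.interpolate_apply, Polynomial.finset_sum_coeff]
      refine Finset.sum_congr rfl fun μ hμ => ?_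
      rw [Polynomial.coeff_C_mul]
    have habs : ‖Pc.coeff i‖ ≤ K i := by
      rw [hco, hK_def]
      calc ‖∑ μ ∈ s, Pc.eval μ * (Lagrange.basis s id μ).coeff i‖
          ≤ ∑ μ ∈ s, ‖Pc.eval μ * (Lagrange.basis s id μ).coeff i‖ := by
            exact norm_sum_le _ _
        _ ≤ ∑ μ ∈ s, B μ * ‖(Lagrange.basis s id μ).coeff i‖ := by
            refine Finset.sum_le_sum fun μ hμ => ?_
            rw [norm_mul]
            refine mul_le_mul_of_nonneg_right ?_ (norm_nonneg _)
            have heval : Pc.eval μ = Polynomial.aeval μ (P n) := by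
              rw [hPc_def, Polynomial.eval_map, ← algebraMap_int_eq, ← Polynomial.aeval_def]
            rw [heval]
            exact hbound μ hμ n
    have : ‖((P n).coeff i : ℂ)‖ = |(((P n).coeff i : ℝ))| := by
      rw [← Real.norm_eq_abs, ← Complex.norm_real]; norm_cast; simp [Int.norm_eq_abs]
    rw [← this]
    have hPci : Pc.coeff i = (((P n).coeff i : ℂ)) := by
      rw [hPc_def, Polynomial.coeff_map]; simp
    rw [← hPci]
    exact habs
  -- pigeonhole on coefficient vectors
  have hmem : ∀ n (i : Fin d), (P n).coeff i ∈ Finset.Icc (-⌈K i⌉) ⌈K i⌉ := by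
    intro n i
    have h1 := hcoeff n i
    have h2 : K i ≤ (⌈K i⌉ : ℝ) := Int.le_ceil _
    rw [abs_le] at h1
    rw [Finset.mem_Icc]
    constructor
    · have h3 : (-(⌈K i⌉:ℝ)) ≤ (((P n).coeff i : ℤ) : ℝ) := by linarith
      exact_mod_cast h3
    · have h3 : (((P n).coeff i : ℤ) : ℝ) ≤ (⌈K i⌉:ℝ) := by linarith
      exact_mod_cast h3
  let G : ℕ → ∀ i : Fin d, {a : ℤ // a ∈ Finset.Icc (-⌈K (i:ℕ)⌉) ⌈K (i:ℕ)⌉} :=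
    fun n i => ⟨(P n).coeff i, hmem n i⟩
  obtain ⟨a, b, hne, heqG⟩ := Finite.exists_ne_map_eq_of_infinite G
  have hPab : P a = P b := by
    ext i
    by_cases hi : i < d
    · exact congrArg Subtype.val (congrFun heqG ⟨i, hi⟩)
    · push_neg at hi
      have hdi : (d : WithBot ℕ) ≤ (i : WithBot ℕ) := by exact_mod_cast hi
      rw [Polynomial.coeff_eq_zero_of_degree_lt (lt_of_lt_of_le (hdegP a) hdi),
        Polynomial.coeff_eq_zero_of_degree_lt (lt_of_lt_of_le (hdegP b) hdi)]
  have hyab : y a = y b := by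
    have h6 : (q:ℝ) * y a = (q:ℝ) * y b := by rw [← hreal a, hPab, hreal b]
    exact mul_left_cancel₀ hq0 h6
  obtain ⟨a', b', hab, hyy⟩ : ∃ a' b', a' < b' ∧ y a' = y b' := by
    rcases hne.lt_or_gt with h | h
    · exact ⟨a, b, h, hyab⟩
    · exact ⟨b, a, h, hyab.symm⟩
  refine ⟨a', b' - a', by omega, ?_⟩
  have h5 : a' + (b' - a') = b' := by omega
  rw [h5]
  exact hyy.symm
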